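/- Define, for m ≥ 1, a₁(m,x) = ∑_{ν=0}^m [x−1+ν choose ν]·[x choose m−ν]. Then for every integer n ≥ 0, a₁(2n, 1/2) = a₁(2n+1, 1/2) = [n−1/2 choose n] = C(2n,n)/4^n, where C(2n,n) is the central binomial coefficient. -/

import Mathlib

/-- The polynomial `[x choose k] = x(x−1)⋯(x−k+1)/k!`. -/
noncomputable def binomPoly (k : ℕ) : Polynomial ℚ :=
  Polynomial.C ((k.factorial : ℚ))⁻¹ *
    ∏ i ∈ Finset.range k, (Polynomial.X - Polynomial.C (i : ℚ))

/-- `a₁(m,x) = ∑_{ν=0}^m [x−1+ν choose ν]·[x choose m−ν]`. -/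
noncomputable def a1Poly (m : ℕ) : Polynomial ℚ :=
  ∑ ν ∈ Finset.range (m + 1),
    (binomPoly ν).comp (Polynomial.X + Polynomial.C ((ν : ℚ) - 1)) * binomPoly (m - ν)

/-- `A₁(m,x) = a₁(m,x)²`. -/
noncomputable def A1Poly (m : ℕ) : Polynomial ℚ := (a1Poly m) ^ 2

/-- The generalized binomial coefficient `[y choose n] = y(y−1)⋯(y−n+1)/n!` for rational `y`. -/
def genBinom (y : ℚ) (n : ℕ) : ℚ :=
  (∏ i ∈ Finset.range n, (y - (i : ℚ))) / (n.factorial : ℚ)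

def bseq (ν : ℕ) : ℚ := genBinom ((ν : ℚ) - 1 / 2) ν
def cseq (k : ℕ) : ℚ := genBinom (1 / 2) k
def aseq (m : ℕ) : ℚ := ∑ ν ∈ Finset.range (m + 1), bseq ν * cseq (m - ν)

lemma eval_binomPoly (k : ℕ) (x : ℚ) : (binomPoly k).eval x = genBinom x k := by
  simp [binomPoly, genBinom, Polynomial.eval_prod, div_eq_inv_mul]

lemma aseq_eval (m : ℕ) : (a1Poly m).eval (1 / 2 : ℚ) = aseq m := by
  unfold a1Poly aseq bseq cseq
  rw [Polynomial.eval_finset_sum]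
  refine Finset.sum_congr rfl fun ν _ => ?_
  rw [Polynomial.eval_mul, Polynomial.eval_comp, Polynomial.eval_add, Polynomial.eval_X,
    Polynomial.eval_C, eval_binomPoly, eval_binomPoly]
  congr 2
  ring

lemma bseq_succ (ν : ℕ) : bseq (ν + 1) = bseq ν * ((ν : ℚ) + 1 / 2) / ((ν : ℚ) + 1) := by
  unfold bseq genBinom
  rw [Finset.prod_range_succ', Nat.factorial_succ]
  have h : ∀ i ∈ Finset.range ν,
      ((ν + 1 : ℕ) : ℚ) - 1 / 2 - (((i + 1 : ℕ) : ℚ)) = ((ν : ℚ) - 1 / 2 - (i : ℚ)) := by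
    intro i _; push_cast; ring
  rw [Finset.prod_congr rfl h]
  have hν : ((ν : ℚ) + 1) ≠ 0 := by positivity
  have hf : ((ν.factorial : ℚ)) ≠ 0 := by
    exact_mod_cast Nat.factorial_ne_zero ν
  push_cast
  field_simp
  ring

lemma cseq_succ (k : ℕ) : cseq (k + 1) = cseq k * (1 / 2 - (k : ℚ)) / ((k : ℚ) + 1) := by
  unfold cseq genBinom
  rw [Finset.prod_range_succ, Nat.factorial_succ]
  push_cast
  rw [div_mul_eq_mul_div, div_div, mul_comm ((k : ℚ) + 1) ((k.factorial : ℚ))]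

def Pseq (m : ℕ) : ℚ := ∑ ν ∈ Finset.range (m + 1), (ν : ℚ) * (bseq ν * cseq (m - ν))
def Qseq (m : ℕ) : ℚ := ∑ ν ∈ Finset.range (m + 1), ((m - ν : ℕ) : ℚ) * (bseq ν * cseq (m - ν))

lemma PQ (m : ℕ) : Pseq m + Qseq m = (m : ℚ) * aseq m := by
  unfold Pseq Qseq aseq
  rw [Finset.mul_sum, ← Finset.sum_add_distrib]
  refine Finset.sum_congr rfl fun ν hν => ?_
  have hle : ν ≤ m := Finset.mem_range_succ_iff.mp hν
  rw [Nat.cast_sub hle]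
  ring

lemma Pseq_succ (m : ℕ) : Pseq (m + 1) = 1 / 2 * aseq m + Pseq m := by
  unfold Pseq aseq
  rw [Finset.sum_range_succ']
  have h : ∀ i ∈ Finset.range (m + 1),
      ((i + 1 : ℕ) : ℚ) * (bseq (i + 1) * cseq (m + 1 - (i + 1))) =
      1 / 2 * (bseq i * cseq (m - i)) + (i : ℚ) * (bseq i * cseq (m - i)) := by
    intro i _
    rw [Nat.succ_sub_succ, bseq_succ]
    have : ((i : ℚ) + 1) ≠ 0 := by positivity
    push_cast
    field_simp
    ring
  rw [Finset.sum_congr rfl h, Finset.sum_add_distrib]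
  simp [Finset.mul_sum]

lemma Qseq_succ (m : ℕ) : Qseq (m + 1) = 1 / 2 * aseq m - Qseq m := by
  unfold Qseq aseq
  rw [Finset.sum_range_succ]
  simp only [Nat.sub_self, Nat.cast_zero, zero_mul, add_zero]
  have h : ∀ ν ∈ Finset.range (m + 1),
      ((m + 1 - ν : ℕ) : ℚ) * (bseq ν * cseq (m + 1 - ν)) =
      1 / 2 * (bseq ν * cseq (m - ν)) - ((m - ν : ℕ) : ℚ) * (bseq ν * cseq (m - ν)) := by
    intro ν hν
    have hle : ν ≤ m := Finset.mem_range_succ_iff.mp hν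
    have h1 : m + 1 - ν = (m - ν) + 1 := by omega
    rw [h1, cseq_succ, Nat.cast_add, Nat.cast_one]
    have hne : (((m - ν : ℕ) : ℚ) + 1) ≠ 0 := by positivity
    set K := ((m - ν : ℕ) : ℚ) with hK
    field_simp
  rw [Finset.sum_congr rfl h, Finset.sum_sub_distrib]
  simp [Finset.mul_sum]

lemma aseq_rec (m : ℕ) : ((m : ℚ) + 2) * aseq (m + 2) = aseq (m + 1) + (m : ℚ) * aseq m := by
  have h0 := PQ m
  have h2 := PQ (m + 2)
  have hp1 := Pseq_succ m
  have hq1 := Qseq_succ m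
  have hp2 := Pseq_succ (m + 1)
  have hq2 := Qseq_succ (m + 1)
  push_cast at h2
  linarith

lemma aseq_zero : aseq 0 = 1 := by
  norm_num [aseq, bseq, cseq, genBinom]

lemma aseq_one : aseq 1 = 1 := by
  norm_num [aseq, bseq, cseq, genBinom, Finset.sum_range_succ, Finset.prod_range_succ]

lemma bseq_zero : bseq 0 = 1 := by
  norm_num [bseq, genBinom]

lemma main_ind (n : ℕ) : aseq (2 * n) = bseq n ∧ aseq (2 * n + 1) = bseq n := by
  induction n with
  | zero => simpa [aseq_zero, aseq_one] using bseq_zero.symm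
  | succ n ih =>
    obtain ⟨h1, h2⟩ := ih
    have hr1 := aseq_rec (2 * n)
    have hr2 := aseq_rec (2 * n + 1)
    have hb := bseq_succ n
    have hne : ((n : ℚ) + 1) ≠ 0 := by positivity
    have h2ne : (2 * (n : ℚ) + 2) ≠ 0 := by positivity
    have e1 : (2 * (n : ℚ) + 2) * bseq (n + 1) = (2 * (n : ℚ) + 1) * bseq n := by
      rw [hb]; field_simp
    push_cast at hr1 hr2
    rw [h1, h2] at hr1
    have key : aseq (2 * n + 2) = bseq (n + 1) := by
      refine mul_left_cancel₀ h2ne ?_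
      rw [e1]; linarith
    have hi1 : 2 * n + 1 + 2 = 2 * n + 3 := by ring
    have hi2 : 2 * n + 1 + 1 = 2 * n + 2 := by ring
    rw [hi1, hi2, key, h2] at hr2
    have key2 : aseq (2 * n + 3) = bseq (n + 1) := by
      have h3ne : (2 * (n : ℚ) + 3) ≠ 0 := by positivity
      refine mul_left_cancel₀ h3ne ?_
      linarith
    constructor
    · rw [show 2 * (n + 1) = 2 * n + 2 from by ring, key]
    · rw [show 2 * (n + 1) + 1 = 2 * n + 3 from by ring, key2]

lemma central (n : ℕ) : bseq n = ((2 * n).choose n : ℚ) / 4 ^ n := by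
  induction n with
  | zero => simp [bseq_zero]
  | succ n ih =>
    have h1 : (2 * n + 2) * (2 * n + 1).choose n = (2 * n + 2).choose (n + 1) * (n + 1) := by
      have := Nat.add_one_mul_choose_eq (2 * n + 1) n
      simpa [Nat.succ_eq_add_one] using this
    have h2 : (2 * n + 1) * (2 * n).choose n = (2 * n + 1).choose (n + 1) * (n + 1) := by
      have := Nat.add_one_mul_choose_eq (2 * n) n
      simpa [Nat.succ_eq_add_one] using this
    have h3 : (2 * n + 1).choose (n + 1) = (2 * n + 1).choose n := by
      have := Nat.choose_symm (show n + 1 ≤ 2 * n + 1 by omega)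
      simpa [show 2 * n + 1 - (n + 1) = n by omega] using this.symm
    rw [bseq_succ, ih]
    rw [h3] at h2
    have h1' : (2 * (n : ℚ) + 2) * ((2 * n + 1).choose n : ℚ) =
        ((2 * n + 2).choose (n + 1) : ℚ) * ((n : ℚ) + 1) := by exact_mod_cast h1
    have h2' : (2 * (n : ℚ) + 1) * ((2 * n).choose n : ℚ) =
        ((2 * n + 1).choose n : ℚ) * ((n : ℚ) + 1) := by exact_mod_cast h2
    have hne : ((n : ℚ) + 1) ≠ 0 := by positivity
    have hcomb : ((2 * n + 2).choose (n + 1) : ℚ) * (((n : ℚ) + 1) * ((n : ℚ) + 1)) =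
        (2 * (n : ℚ) + 2) * (2 * (n : ℚ) + 1) * ((2 * n).choose n : ℚ) := by
      linear_combination (-((n : ℚ) + 1)) * h1' + (-(2 * (n : ℚ) + 2)) * h2'
    have hgoal : 2 * (n + 1) = 2 * n + 2 := by omega
    rw [hgoal]
    have hval : ((2 * n + 2).choose (n + 1) : ℚ) =
        (2 * (n : ℚ) + 2) * (2 * (n : ℚ) + 1) * ((2 * n).choose n : ℚ)
          / (((n : ℚ) + 1) * ((n : ℚ) + 1)) := by
      rw [eq_div_iff (by positivity)]; linear_combination hcomb
    rw [hval]
    field_simp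
    ring

/-- For every `n ≥ 0`: `a₁(2n,1/2) = a₁(2n+1,1/2) = [n−1/2 choose n] = C(2n,n)/4^n`. -/
theorem stmt18 : ∀ n : ℕ,
    (a1Poly (2 * n)).eval (1 / 2 : ℚ) = (a1Poly (2 * n + 1)).eval (1 / 2 : ℚ) ∧
    (a1Poly (2 * n)).eval (1 / 2 : ℚ) = genBinom ((n : ℚ) - 1 / 2) n ∧
    genBinom ((n : ℚ) - 1 / 2) n = ((2 * n).choose n : ℚ) / 4 ^ n := by
  intro n
  obtain ⟨h1, h2⟩ := main_ind n
  refine ⟨?_, ?_, ?_⟩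
  · rw [aseq_eval, aseq_eval, h1, h2]
  · rw [aseq_eval, h1]; rfl
  · exact central n
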